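/- For every multi-index β ∈ ℕⁿ there is a constant K_β such that for all multi-indices α ∈ ℕⁿ, d_α · d_{α+2β} ≤ K_β · d_{α+β}², where d_γ² = ∫_{𝔹ⁿ} |z^γ|² exp(1/(|z|²−1)) dV(z). -/

import Mathlib

open MeasureTheory Set



lemma normSq_measurable : Measurable (fun z : ℂ => ‖z‖^2) := by fun_prop

def Sball (a : ℝ) : Set ℂ := {z : ℂ | ‖z‖^2 ≤ a}

lemma Sball_meas (a : ℝ) : MeasurableSet (Sball a) :=
  normSq_measurable measurableSet_Iic

lemma vol_Sball (a : ℝ) : volume (Sball a) = ENNReal.ofReal a * NNReal.pi := by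
  rcases le_or_gt 0 a with ha | ha
  · have : Sball a = Metric.closedBall 0 (Real.sqrt a) := by
      ext z
      simp only [Sball, mem_setOf_eq, Metric.mem_closedBall, dist_zero_right]
      exact (Real.le_sqrt (norm_nonneg z) ha).symm
    rw [this, Complex.volume_closedBall, ← ENNReal.ofReal_pow (Real.sqrt_nonneg a),
      Real.sq_sqrt ha]
  · have : Sball a = ∅ := by
      ext z; simp only [Sball, mem_setOf_eq, mem_empty_iff_false, iff_false, not_le]
      exact lt_of_lt_of_le ha (by positivity)
    rw [this, measure_empty, ENNReal.ofReal_of_nonpos ha.le, zero_mul]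

lemma vol_Sball_ne_top (a : ℝ) : volume (Sball a) ≠ ⊤ := by
  rw [vol_Sball]; exact ne_of_lt (ENNReal.mul_lt_top ENNReal.ofReal_lt_top ENNReal.coe_lt_top)

lemma map_normSq :
    Measure.map (fun z : ℂ => ‖z‖^2) volume
      = (NNReal.pi : ENNReal) • (volume.restrict (Ioi (0:ℝ))) := by
  refine Measure.ext_of_Ioc' _ _ (fun a b hab => ?_) (fun a b hab => ?_)
  · rw [Measure.map_apply normSq_measurable measurableSet_Ioc]
    have hsub : (fun z : ℂ => ‖z‖^2) ⁻¹' (Ioc a b) ⊆ Sball b := fun z hz => hz.2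
    exact ne_of_lt (lt_of_le_of_lt (measure_mono hsub)
      (lt_of_le_of_ne le_top (vol_Sball_ne_top b)))
  · rw [Measure.map_apply normSq_measurable measurableSet_Ioc]
    have hpre : (fun z : ℂ => ‖z‖^2) ⁻¹' (Ioc a b) = Sball b \ Sball a := by
      ext z; simp only [mem_preimage, mem_Ioc, mem_diff, Sball, mem_setOf_eq, not_le]
      tauto
    have hss : Sball a ⊆ Sball b := fun z hz => le_trans hz hab.le
    rw [hpre, measure_diff hss (Sball_meas a).nullMeasurableSet (vol_Sball_ne_top a),
      vol_Sball, vol_Sball]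
    rw [Measure.smul_apply, Measure.restrict_apply measurableSet_Ioc]
    have : Ioc a b ∩ Ioi 0 = Ioc (max a 0) b := by
      ext x; simp only [mem_inter_iff, mem_Ioc, mem_Ioi, max_lt_iff]; tauto
    rw [this, Real.volume_Ioc]
    rw [show ENNReal.ofReal (b - max a 0) = ENNReal.ofReal b - ENNReal.ofReal (max a 0) from
      ENNReal.ofReal_sub _ (le_max_right a 0)]
    have hmax : ENNReal.ofReal (max a 0) = ENNReal.ofReal a := by
      rcases le_or_gt 0 a with h | h
      · rw [max_eq_left h]
      · rw [max_eq_right h.le, ENNReal.ofReal_of_nonpos h.le, ENNReal.ofReal_zero]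
    rw [hmax, smul_eq_mul, ENNReal.mul_sub (fun _ _ => ENNReal.coe_ne_top),
      mul_comm (NNReal.pi : ENNReal) (ENNReal.ofReal b),
      mul_comm (NNReal.pi : ENNReal) (ENNReal.ofReal a)]

lemma lintegral_normSq (F : ℝ → ENNReal) (hF : Measurable F) :
    ∫⁻ z : ℂ, F (‖z‖^2) = (NNReal.pi : ENNReal) * ∫⁻ t in Ioi (0:ℝ), F t := by
  rw [← MeasureTheory.lintegral_map hF normSq_measurable, map_normSq,
    lintegral_smul_measure, smul_eq_mul]


lemma beta_nat (a b : ℕ) {u : ℝ} (hu : 0 < u) :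
    ∫ x in (0:ℝ)..u, x^a * (u-x)^b
      = u^(a+b+1) * ((a.factorial : ℝ) * b.factorial / (a+b+1).factorial) := by
  have h := Complex.betaIntegral_scaled ((a:ℂ)+1) ((b:ℂ)+1) hu
  have hbeta : Complex.betaIntegral ((a:ℂ)+1) ((b:ℂ)+1)
      = ((a.factorial : ℂ) * b.factorial / (a+b+1).factorial) := by
    have hg := Complex.Gamma_mul_Gamma_eq_betaIntegral
      (s := (a:ℂ)+1) (t := (b:ℂ)+1)
      (by rw [Complex.add_re, Complex.natCast_re, Complex.one_re]; positivity)
      (by rw [Complex.add_re, Complex.natCast_re, Complex.one_re]; positivity)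
    have h1 : Complex.Gamma ((a:ℂ)+1) = (a.factorial : ℂ) := Complex.Gamma_nat_eq_factorial a
    have h2 : Complex.Gamma ((b:ℂ)+1) = (b.factorial : ℂ) := Complex.Gamma_nat_eq_factorial b
    have h3 : Complex.Gamma (((a:ℂ)+1) + ((b:ℂ)+1)) = ((a+b+1).factorial : ℂ) := by
      rw [show ((a:ℂ)+1) + ((b:ℂ)+1) = ((a+b+1 : ℕ) : ℂ) + 1 by push_cast; ring]
      exact Complex.Gamma_nat_eq_factorial (a+b+1)
    rw [h1, h2, h3] at hg
    have hne : (((a+b+1).factorial : ℕ) : ℂ) ≠ 0 :=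
      Nat.cast_ne_zero.mpr (Nat.factorial_ne_zero _)
    field_simp
    rw [mul_comm]
    exact hg.symm
  rw [hbeta] at h
  have hint : (∫ x in (0:ℝ)..u, ((x:ℂ))^(((a:ℂ)+1)-1) * (((u:ℂ)) - x)^(((b:ℂ)+1)-1))
      = ((∫ x in (0:ℝ)..u, x^a * (u-x)^b : ℝ) : ℂ) := by
    rw [← intervalIntegral.integral_ofReal]
    refine intervalIntegral.integral_congr (fun x _ => ?_)
    rw [show ((a:ℂ)+1)-1 = ((a:ℕ):ℂ) by ring, show ((b:ℂ)+1)-1 = ((b:ℕ):ℂ) by ring,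
      Complex.cpow_natCast, Complex.cpow_natCast]
    push_cast
    ring
  rw [hint] at h
  have hpow : ((u:ℂ))^(((a:ℂ)+1)+((b:ℂ)+1)-1) = ((u^(a+b+1) : ℝ) : ℂ) := by
    rw [show ((a:ℂ)+1)+((b:ℂ)+1)-1 = ((a+b+1 : ℕ) : ℂ) by push_cast; ring,
      Complex.cpow_natCast]
    push_cast; ring
  rw [hpow] at h
  have h2 : ((∫ x in (0:ℝ)..u, x^a * (u-x)^b : ℝ) : ℂ)
      = ((u^(a+b+1) * ((a.factorial : ℝ) * b.factorial / (a+b+1).factorial) : ℝ) : ℂ) := by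
    rw [h]; push_cast; ring
  exact_mod_cast h2



lemma lintegral_beta (a b : ℕ) {u : ℝ} (hu : 0 < u) :
    ∫⁻ s in Ioo (0:ℝ) u, ENNReal.ofReal (s^a * (u-s)^b)
      = ENNReal.ofReal (u^(a+b+1) * ((a.factorial : ℝ) * b.factorial / (a+b+1).factorial)) := by
  have hcont : Continuous (fun s : ℝ => s^a * (u-s)^b) := by continuity
  have hint : IntegrableOn (fun s : ℝ => s^a * (u-s)^b) (Ioo 0 u) :=
    (hcont.integrableOn_Icc (a := 0) (b := u)).mono_set Ioo_subset_Icc_self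
  have hnn : 0 ≤ᵐ[volume.restrict (Ioo 0 u)] (fun s : ℝ => s^a * (u-s)^b) := by
    refine (ae_restrict_iff' measurableSet_Ioo).mpr (Filter.Eventually.of_forall fun s hs => ?_)
    have h1 : (0:ℝ) < s := hs.1
    have h2 : s < u := hs.2
    show (0:ℝ) ≤ s^a * (u-s)^b
    have h3 : (0:ℝ) ≤ u - s := by linarith
    positivity
  rw [← MeasureTheory.ofReal_integral_eq_lintegral_ofReal hint hnn]
  congr 1
  have : ∫ s in Ioo (0:ℝ) u, s^a * (u-s)^b = ∫ s in (0:ℝ)..u, s^a * (u-s)^b := by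
    rw [intervalIntegral.integral_of_le hu.le, integral_Ioc_eq_integral_Ioo]
  rw [this, beta_nat a b hu]

lemma stepB_inner (b : ℕ) (h : ℝ → ENNReal) (hh : Measurable h) (t : ℝ) :
    ∫⁻ s in Ioi (0:ℝ), ENNReal.ofReal (s^b) * h (t+s)
      = ∫⁻ u in Ioi t, ENNReal.ofReal ((u-t)^b) * h u := by
  have hmp := measurePreserving_add_right (volume : Measure ℝ) t
  have hme : MeasurableEmbedding (· + t : ℝ → ℝ) := (Homeomorph.addRight t).measurableEmbedding
  have := hmp.setLIntegral_comp_preimage_emb hme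
    (fun u => ENNReal.ofReal ((u-t)^b) * h u) (Ioi t)
  have hpre : (· + t : ℝ → ℝ) ⁻¹' (Ioi t) = Ioi 0 := by
    ext s; simp [mem_preimage, mem_Ioi]
  rw [hpre] at this
  rw [← this]
  refine lintegral_congr (fun s => ?_)
  rw [add_sub_cancel_right, add_comm]


lemma stepB (a b : ℕ) (h : ℝ → ENNReal) (hh : Measurable h) :
    ∫⁻ t in Ioi (0:ℝ), ENNReal.ofReal (t^a) *
        ∫⁻ s in Ioi (0:ℝ), ENNReal.ofReal (s^b) * h (t+s)
    = ENNReal.ofReal ((a.factorial : ℝ) * b.factorial / (a+b+1).factorial) *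
        ∫⁻ u in Ioi (0:ℝ), ENNReal.ofReal (u^(a+b+1)) * h u := by
  set G : ℝ → ℝ → ENNReal := fun t u =>
    if 0 < t ∧ t < u then ENNReal.ofReal (t^a * (u-t)^b) * h u else 0 with hG
  have hGmeas : Measurable (Function.uncurry G) := by
    apply Measurable.ite
    · exact (measurableSet_lt measurable_const measurable_fst).inter
        (measurableSet_lt measurable_fst measurable_snd)
    · exact (((measurable_fst.pow_const a).mul
        ((measurable_snd.sub measurable_fst).pow_const b)).ennreal_ofReal).mul
        (hh.comp measurable_snd)
    · exact measurable_const
  have key : ∀ t ∈ Ioi (0:ℝ),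
      ENNReal.ofReal (t^a) * ∫⁻ s in Ioi (0:ℝ), ENNReal.ofReal (s^b) * h (t+s)
        = ∫⁻ u, G t u := by
    intro t ht
    rw [stepB_inner b h hh t]
    have hm1 : Measurable fun u : ℝ => ENNReal.ofReal ((u-t)^b) * h u :=
      (((measurable_id.sub_const t).pow_const b).ennreal_ofReal).mul hh
    rw [← lintegral_const_mul _ hm1]
    rw [← lintegral_indicator measurableSet_Ioi]
    refine lintegral_congr (fun u => ?_)
    rw [indicator_apply]
    have ht' : (0:ℝ) < t := ht
    by_cases hu : u ∈ Ioi t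
    · rw [if_pos hu, hG]
      simp only
      rw [if_pos ⟨ht, hu⟩, ← mul_assoc, ← ENNReal.ofReal_mul (by positivity)]
    · rw [if_neg hu, hG]
      simp only
      rw [if_neg (fun hc => hu hc.2)]
  calc ∫⁻ t in Ioi (0:ℝ), ENNReal.ofReal (t^a) *
        ∫⁻ s in Ioi (0:ℝ), ENNReal.ofReal (s^b) * h (t+s)
      = ∫⁻ t in Ioi (0:ℝ), ∫⁻ u, G t u := by
        exact setLIntegral_congr_fun measurableSet_Ioi
          (fun t ht => key t ht)
    _ = ∫⁻ t, ∫⁻ u, G t u := by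
        rw [← lintegral_indicator measurableSet_Ioi]
        refine lintegral_congr (fun t => ?_)
        rw [indicator_apply]
        by_cases ht : t ∈ Ioi (0:ℝ)
        · rw [if_pos ht]
        · rw [if_neg ht]
          symm
          have hz : ∀ u, G t u = 0 := by
            intro u; rw [hG]; simp only
            rw [if_neg (fun hc => ht hc.1)]
          simp only [hz, lintegral_zero]
    _ = ∫⁻ u, ∫⁻ t, G t u := lintegral_lintegral_swap hGmeas.aemeasurable
    _ = ∫⁻ u, (Ioi (0:ℝ)).indicator
          (fun u => ENNReal.ofReal (u^(a+b+1) *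
            ((a.factorial : ℝ) * b.factorial / (a+b+1).factorial)) * h u) u := by
        refine lintegral_congr (fun u => ?_)
        have hstep : ∀ t, G t u = (Ioo (0:ℝ) u).indicator
            (fun t => ENNReal.ofReal (t^a * (u-t)^b) * h u) t := by
          intro t
          rw [hG, indicator_apply]
          simp only [mem_Ioo]
        simp only [hstep]
        rw [lintegral_indicator measurableSet_Ioo]
        by_cases hu : u ∈ Ioi (0:ℝ)
        · rw [indicator_of_mem hu]
          have hm : Measurable fun s : ℝ => ENNReal.ofReal (s^a * (u-s)^b) :=
            Measurable.ennreal_ofReal (by fun_prop)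
          rw [lintegral_mul_const _ hm, lintegral_beta a b hu]
        · rw [indicator_of_notMem hu, Ioo_eq_empty (by simpa using hu),
            Measure.restrict_empty, lintegral_zero_measure]
    _ = ENNReal.ofReal ((a.factorial : ℝ) * b.factorial / (a+b+1).factorial) *
        ∫⁻ u in Ioi (0:ℝ), ENNReal.ofReal (u^(a+b+1)) * h u := by
        rw [lintegral_indicator measurableSet_Ioi]
        have hc : (0:ℝ) ≤ (a.factorial : ℝ) * b.factorial / (a+b+1).factorial := by positivity
        have hcongr : ∀ u ∈ Ioi (0:ℝ),
            ENNReal.ofReal (u^(a+b+1) *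
              ((a.factorial : ℝ) * b.factorial / (a+b+1).factorial)) * h u
            = ENNReal.ofReal ((a.factorial : ℝ) * b.factorial / (a+b+1).factorial) *
              (ENNReal.ofReal (u^(a+b+1)) * h u) := by
          intro u hu
          have hu' : (0:ℝ) < u := hu
          rw [ENNReal.ofReal_mul (by positivity), mul_comm (ENNReal.ofReal (u^(a+b+1))),
            mul_assoc]
        rw [setLIntegral_congr_fun measurableSet_Ioi
          hcongr]
        exact lintegral_const_mul _ (((measurable_id.pow_const (a+b+1)).ennreal_ofReal).mul hh)


lemma prodpow_meas {m : ℕ} (δ : Fin m → ℕ) :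
    Measurable fun y : Fin m → ℂ => (∏ j, ENNReal.ofReal (‖y j‖^(2 * δ j))) :=
  Finset.measurable_prod _ (fun j _ => ((measurable_pi_apply j).norm.pow_const _).ennreal_ofReal)

lemma sumsq_meas {m : ℕ} : Measurable fun y : Fin m → ℂ => ∑ j, ‖y j‖^2 :=
  Finset.measurable_sum _ fun j _ => (measurable_pi_apply j).norm.pow_const 2

lemma stepC : ∀ (n : ℕ) (γ : Fin (n+1) → ℕ) (h : ℝ → ENNReal), Measurable h →
    ∫⁻ z : Fin (n+1) → ℂ, (∏ i, ENNReal.ofReal (‖z i‖^(2 * γ i))) * h (∑ i, ‖z i‖^2)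
    = (NNReal.pi : ENNReal)^(n+1) *
      ENNReal.ofReal ((∏ i, ((γ i).factorial : ℝ)) / ((∑ i, γ i) + n).factorial) *
      ∫⁻ s in Ioi (0:ℝ), ENNReal.ofReal (s^((∑ i, γ i) + n)) * h s := by
  intro n
  induction n with
  | zero =>
    intro γ h hh
    have hF : Measurable fun t : ℝ => ENNReal.ofReal (t^(γ 0)) * h t :=
      ((measurable_id.pow_const _).ennreal_ofReal).mul hh
    have he := (MeasureTheory.volume_preserving_funUnique (Fin 1) ℂ).lintegral_comp
      (f := fun w : ℂ => ENNReal.ofReal (‖w‖^(2 * γ 0)) * h (‖w‖^2))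
      (((measurable_norm.pow_const _).ennreal_ofReal).mul (hh.comp (measurable_norm.pow_const 2)))
    have hcong : ∫⁻ z : Fin 1 → ℂ, (∏ i, ENNReal.ofReal (‖z i‖^(2 * γ i))) * h (∑ i, ‖z i‖^2)
        = ∫⁻ z : Fin 1 → ℂ, ENNReal.ofReal (‖z 0‖^(2 * γ 0)) * h (‖z 0‖^2) := by
      refine lintegral_congr (fun z => ?_)
      rw [Fin.prod_univ_one, Fin.sum_univ_one]
    rw [hcong]
    have : ∫⁻ z : Fin 1 → ℂ, ENNReal.ofReal (‖z 0‖^(2 * γ 0)) * h (‖z 0‖^2)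
        = ∫⁻ w : ℂ, ENNReal.ofReal (‖w‖^(2 * γ 0)) * h (‖w‖^2) := he
    rw [this]
    have : ∫⁻ w : ℂ, ENNReal.ofReal (‖w‖^(2 * γ 0)) * h (‖w‖^2)
        = ∫⁻ w : ℂ, (fun t => ENNReal.ofReal (t^(γ 0)) * h t) (‖w‖^2) := by
      refine lintegral_congr (fun w => ?_)
      simp only [pow_mul]
    rw [this, lintegral_normSq _ hF]
    have hconst : ENNReal.ofReal ((∏ i : Fin 1, ((γ i).factorial : ℝ))
        / ((∑ i : Fin 1, γ i) + 0).factorial) = 1 := by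
      rw [Fin.prod_univ_one, Fin.sum_univ_one, Nat.add_zero,
        div_self (by exact_mod_cast Nat.factorial_ne_zero (γ 0)), ENNReal.ofReal_one]
    rw [hconst, pow_one, mul_one]
    refine congrArg _ (setLIntegral_congr_fun measurableSet_Ioi
      (fun s _ => ?_))
    simp
  | succ n IH =>
    intro γ h hh
    set k : ℕ := (∑ i : Fin (n+1), γ i.succ) + n with hk
    -- the equivalence
    set e := MeasurableEquiv.piFinSuccAbove (fun _ : Fin (n+2) => ℂ) 0 with he_def
    set F : ℂ × (Fin (n+1) → ℂ) → ENNReal := fun p =>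
      ENNReal.ofReal (‖p.1‖^(2 * γ 0)) *
        ((∏ j, ENNReal.ofReal (‖p.2 j‖^(2 * γ j.succ))) * h (‖p.1‖^2 + ∑ j, ‖p.2 j‖^2))
      with hF_def
    have hFmeas : Measurable F := by
      apply Measurable.mul
      · exact (measurable_fst.norm.pow_const _).ennreal_ofReal
      · exact ((prodpow_meas (fun j => γ j.succ)).comp measurable_snd).mul
          (hh.comp ((measurable_fst.norm.pow_const 2).add (sumsq_meas.comp measurable_snd)))
    have step1 : ∫⁻ z : Fin (n+2) → ℂ, (∏ i, ENNReal.ofReal (‖z i‖^(2 * γ i))) * h (∑ i, ‖z i‖^2)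
        = ∫⁻ p : ℂ × (Fin (n+1) → ℂ), F p := by
      rw [← (MeasureTheory.volume_preserving_piFinSuccAbove (fun _ : Fin (n+2) => ℂ) 0).lintegral_comp hFmeas]
      refine lintegral_congr (fun z => ?_)
      have hez : e z = (z 0, fun j => z j.succ) := by
        simp [he_def, MeasurableEquiv.piFinSuccAbove, Fin.succAbove_zero]
        rfl
      rw [show (MeasurableEquiv.piFinSuccAbove (fun _ : Fin (n+2) => ℂ) 0) z
          = (z 0, fun j => z j.succ) from hez, hF_def]
      simp only
      rw [Fin.prod_univ_succ, Fin.sum_univ_succ, mul_assoc]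
    rw [step1, Measure.volume_eq_prod, lintegral_prod _ hFmeas.aemeasurable]
    -- inner integral via IH
    have hinner : ∀ w : ℂ, ∫⁻ y : Fin (n+1) → ℂ, F (w, y)
        = ENNReal.ofReal (‖w‖^(2 * γ 0)) *
          ((NNReal.pi : ENNReal)^(n+1) *
            ENNReal.ofReal ((∏ j : Fin (n+1), ((γ j.succ).factorial : ℝ)) / k.factorial) *
            ∫⁻ s in Ioi (0:ℝ), ENNReal.ofReal (s^k) * h (‖w‖^2 + s)) := by
      intro w
      rw [hF_def]
      simp only
      have hmy : Measurable fun y : Fin (n+1) → ℂ =>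
          (∏ j : Fin (n+1), ENNReal.ofReal (‖y j‖^(2 * γ j.succ))) *
            h (‖w‖^2 + ∑ j : Fin (n+1), ‖y j‖^2) := by
        apply Measurable.mul (prodpow_meas _)
        exact hh.comp (measurable_const.add sumsq_meas)
      rw [lintegral_const_mul _ hmy]
      congr 1
      exact IH (fun j => γ j.succ) (fun s => h (‖w‖^2 + s)) (hh.comp (measurable_const.add measurable_id))
    rw [lintegral_congr hinner]
    -- pull out constants in the outer integral
    have houter : ∫⁻ w : ℂ, ENNReal.ofReal (‖w‖^(2 * γ 0)) *
          ((NNReal.pi : ENNReal)^(n+1) *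
            ENNReal.ofReal ((∏ j : Fin (n+1), ((γ j.succ).factorial : ℝ)) / k.factorial) *
            ∫⁻ s in Ioi (0:ℝ), ENNReal.ofReal (s^k) * h (‖w‖^2 + s))
        = (NNReal.pi : ENNReal)^(n+1) *
            ENNReal.ofReal ((∏ j : Fin (n+1), ((γ j.succ).factorial : ℝ)) / k.factorial) *
          ∫⁻ w : ℂ, ENNReal.ofReal (‖w‖^(2 * γ 0)) *
            ∫⁻ s in Ioi (0:ℝ), ENNReal.ofReal (s^k) * h (‖w‖^2 + s) := by
      rw [← lintegral_const_mul _ ?_]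
      · refine lintegral_congr (fun w => ?_)
        ring
      · apply Measurable.mul
        · exact (measurable_norm.pow_const _).ennreal_ofReal
        · have : Measurable (Function.uncurry fun (w : ℂ) (s : ℝ) =>
              ENNReal.ofReal (s^k) * h (‖w‖^2 + s)) := by
            exact ((measurable_snd.pow_const _).ennreal_ofReal).mul
              (hh.comp ((measurable_fst.norm.pow_const 2).add measurable_snd))
          exact this.lintegral_prod_right
    rw [houter]
    -- apply Step A then Step B
    have hJmeas : Measurable fun t : ℝ => ∫⁻ s in Ioi (0:ℝ), ENNReal.ofReal (s^k) * h (t + s) := by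
      have : Measurable (Function.uncurry fun (t : ℝ) (s : ℝ) =>
          ENNReal.ofReal (s^k) * h (t + s)) :=
        ((measurable_snd.pow_const _).ennreal_ofReal).mul
          (hh.comp (measurable_fst.add measurable_snd))
      exact this.lintegral_prod_right
    have hstepA : ∫⁻ w : ℂ, ENNReal.ofReal (‖w‖^(2 * γ 0)) *
            ∫⁻ s in Ioi (0:ℝ), ENNReal.ofReal (s^k) * h (‖w‖^2 + s)
        = (NNReal.pi : ENNReal) * ∫⁻ t in Ioi (0:ℝ), ENNReal.ofReal (t^(γ 0)) *
            ∫⁻ s in Ioi (0:ℝ), ENNReal.ofReal (s^k) * h (t + s) := by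
      rw [← lintegral_normSq (fun t => ENNReal.ofReal (t^(γ 0)) *
          ∫⁻ s in Ioi (0:ℝ), ENNReal.ofReal (s^k) * h (t + s))
        (((measurable_id.pow_const _).ennreal_ofReal).mul hJmeas)]
      refine lintegral_congr (fun w => ?_)
      rw [pow_mul]
    rw [hstepA, stepB (γ 0) k h hh]
    -- assemble constants
    have hexp : γ 0 + k + 1 = (∑ i : Fin (n+2), γ i) + (n+1) := by
      have hsum : ∑ i : Fin (n+2), γ i = γ 0 + ∑ i : Fin (n+1), γ i.succ := Fin.sum_univ_succ γ
      omega
    have hconstreal : ((∏ j : Fin (n+1), ((γ j.succ).factorial : ℝ)) / k.factorial) *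
        (((γ 0).factorial : ℝ) * k.factorial / ((∑ i : Fin (n+2), γ i) + (n+1)).factorial)
        = (∏ i : Fin (n+2), ((γ i).factorial : ℝ)) / ((∑ i : Fin (n+2), γ i) + (n+1)).factorial := by
      have hprod : ∏ i : Fin (n+2), ((γ i).factorial : ℝ)
          = ((γ 0).factorial : ℝ) * ∏ j : Fin (n+1), ((γ j.succ).factorial : ℝ) :=
        Fin.prod_univ_succ _
      rw [hprod, ← hexp]
      have h1 : (k.factorial : ℝ) ≠ 0 := by exact_mod_cast Nat.factorial_ne_zero _
      have h2 : (((γ 0 + k + 1).factorial : ℕ) : ℝ) ≠ 0 := by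
        exact_mod_cast Nat.factorial_ne_zero _
      field_simp
    rw [hexp]
    calc (NNReal.pi : ENNReal)^(n+1) *
            ENNReal.ofReal ((∏ j : Fin (n+1), ((γ j.succ).factorial : ℝ)) / k.factorial) *
          ((NNReal.pi : ENNReal) *
            (ENNReal.ofReal (((γ 0).factorial : ℝ) * k.factorial / ((∑ i : Fin (n+2), γ i) + (n+1)).factorial) *
              ∫⁻ u in Ioi (0:ℝ), ENNReal.ofReal (u^((∑ i : Fin (n+2), γ i) + (n+1))) * h u))
        = (NNReal.pi : ENNReal)^(n+2) *
          (ENNReal.ofReal ((∏ j : Fin (n+1), ((γ j.succ).factorial : ℝ)) / k.factorial) *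
            ENNReal.ofReal (((γ 0).factorial : ℝ) * k.factorial / ((∑ i : Fin (n+2), γ i) + (n+1)).factorial)) *
          ∫⁻ u in Ioi (0:ℝ), ENNReal.ofReal (u^((∑ i : Fin (n+2), γ i) + (n+1))) * h u := by
          ring
      _ = (NNReal.pi : ENNReal)^(n+2) *
          ENNReal.ofReal ((∏ i : Fin (n+2), ((γ i).factorial : ℝ)) / ((∑ i : Fin (n+2), γ i) + (n+1)).factorial) *
          ∫⁻ u in Ioi (0:ℝ), ENNReal.ofReal (u^((∑ i : Fin (n+2), γ i) + (n+1))) * h u := by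
          rw [← ENNReal.ofReal_mul (by positivity)]
          rw [show ((∏ j : Fin (n+1), ((γ j.succ).factorial : ℝ)) / k.factorial) *
            (((γ 0).factorial : ℝ) * k.factorial / ((∑ i : Fin (n+2), γ i) + (n+1)).factorial)
            = (∏ i : Fin (n+2), ((γ i).factorial : ℝ)) / ((∑ i : Fin (n+2), γ i) + (n+1)).factorial
            from hconstreal]

lemma fact_logconvex (M b : ℕ) : ((M+b).factorial)^2 ≤ M.factorial * (M+2*b).factorial := by
  induction b with
  | zero => simp [pow_two]
  | succ b ih =>
    have h1 : (M+(b+1)).factorial = (M+b).factorial * (M+b+1) := by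
      rw [show M+(b+1) = (M+b)+1 by ring, Nat.factorial_succ]; ring
    have h2 : (M+2*(b+1)).factorial = (M+2*b).factorial * (M+2*b+1) * (M+2*b+2) := by
      rw [show M+2*(b+1) = ((M+2*b)+1)+1 by ring, Nat.factorial_succ, Nat.factorial_succ]
      ring
    rw [h1, h2]
    calc ((M+b).factorial * (M+b+1))^2 = ((M+b).factorial)^2 * ((M+b+1)*(M+b+1)) := by ring
      _ ≤ (M.factorial * (M+2*b).factorial) * ((M+2*b+1)*(M+2*b+2)) := by
          apply Nat.mul_le_mul ih
          apply Nat.mul_le_mul <;> omega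
      _ = M.factorial * ((M+2*b).factorial * (M+2*b+1) * (M+2*b+2)) := by ring

lemma fact_coord (a c : ℕ) : a.factorial * (a+2*c).factorial ≤ 4^c * ((a+c).factorial)^2 := by
  induction c with
  | zero => simp [pow_two]
  | succ c ih =>
    have h2 : (a+2*(c+1)).factorial = (a+2*c).factorial * (a+2*c+1) * (a+2*c+2) := by
      rw [show a+2*(c+1) = ((a+2*c)+1)+1 by ring, Nat.factorial_succ, Nat.factorial_succ]
      ring
    have h1 : ((a+(c+1)).factorial)^2 = ((a+c).factorial)^2 * ((a+c+1)*(a+c+1)) := by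
      rw [show a+(c+1) = (a+c)+1 by ring, Nat.factorial_succ]; ring
    rw [h2, h1]
    calc a.factorial * ((a+2*c).factorial * (a+2*c+1) * (a+2*c+2))
        = (a.factorial * (a+2*c).factorial) * ((a+2*c+1) * (a+2*c+2)) := by ring
      _ ≤ (4^c * ((a+c).factorial)^2) * ((2*(a+c+1)) * (2*(a+c+1))) := by
          apply Nat.mul_le_mul ih
          apply Nat.mul_le_mul <;> omega
      _ = 4^(c+1) * (((a+c).factorial)^2 * ((a+c+1)*(a+c+1))) := by ring


noncomputable def Wgt : ℝ → ENNReal := fun s =>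
  if s < 1 then ENNReal.ofReal (Real.exp (1/(s-1))) else 0

lemma Wgt_meas : Measurable Wgt := by
  apply Measurable.ite measurableSet_Iio
  · exact (((measurable_const.div (measurable_id.sub_const 1)).exp)).ennreal_ofReal
  · exact measurable_const

lemma Wgt_le_one (s : ℝ) : Wgt s ≤ 1 := by
  rw [Wgt]
  split_ifs with h
  · rw [ENNReal.ofReal_le_one]
    rw [Real.exp_le_one_iff]
    apply div_nonpos_of_nonneg_of_nonpos zero_le_one
    linarith
  · exact zero_le_one

lemma Wgt_zero {s : ℝ} (h : 1 ≤ s) : Wgt s = 0 := by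
  rw [Wgt, if_neg (not_lt.mpr h)]

noncomputable def Rk (k : ℕ) : ENNReal := ∫⁻ s in Ioi (0:ℝ), ENNReal.ofReal (s^k) * Wgt s

lemma Rk_anti (k b : ℕ) : Rk (k+b) ≤ Rk k := by
  refine setLIntegral_mono' measurableSet_Ioi (fun s hs => ?_)
  have hs' : (0:ℝ) < s := hs
  rcases lt_or_ge s 1 with h1 | h1
  · apply mul_le_mul_left
    apply ENNReal.ofReal_le_ofReal
    exact pow_le_pow_of_le_one hs'.le h1.le (Nat.le_add_right k b)
  · rw [Wgt_zero h1, mul_zero, mul_zero]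

lemma Rk_step (k : ℕ) :
    Rk k ≤ (2 + ENNReal.ofReal (4 * Real.exp 4)) * Rk (k+1) := by
  have hsplit : Ioi (0:ℝ) = Ioc (0:ℝ) (1/2) ∪ Ioi (1/2) := by
    rw [Ioc_union_Ioi_eq_Ioi (by norm_num : (0:ℝ) ≤ 1/2)]
  have hdisj : Disjoint (Ioc (0:ℝ) (1/2)) (Ioi (1/2:ℝ)) := by
    rw [disjoint_left]; intro x hx hx'
    exact absurd hx.2 (not_le.mpr hx')
  have hRsplit : Rk k = (∫⁻ s in Ioc (0:ℝ) (1/2), ENNReal.ofReal (s^k) * Wgt s)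
      + ∫⁻ s in Ioi (1/2:ℝ), ENNReal.ofReal (s^k) * Wgt s := by
    rw [Rk, hsplit, lintegral_union measurableSet_Ioi hdisj]
  -- lower bound for Rk (k+1)
  have hlow : ENNReal.ofReal ((1/2)^(k+1) * Real.exp (-4) * (1/4)) ≤ Rk (k+1) := by
    have h1 : Rk (k+1) ≥ ∫⁻ s in Ioc (1/2:ℝ) (3/4), ENNReal.ofReal (s^(k+1)) * Wgt s := by
      apply lintegral_mono_set
      intro x hx
      have : (1/2:ℝ) < x := hx.1
      exact lt_trans (by norm_num) this
    refine le_trans ?_ h1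
    have h2 : ∀ s ∈ Ioc (1/2:ℝ) (3/4),
        ENNReal.ofReal ((1/2)^(k+1) * Real.exp (-4)) ≤ ENNReal.ofReal (s^(k+1)) * Wgt s := by
      intro s hs
      have hs1 : (1/2:ℝ) < s := hs.1
      have hs2 : s ≤ 3/4 := hs.2
      have hW : Wgt s = ENNReal.ofReal (Real.exp (1/(s-1))) := by
        rw [Wgt, if_pos (by linarith)]
      rw [hW, ← ENNReal.ofReal_mul (by positivity)]
      apply ENNReal.ofReal_le_ofReal
      apply mul_le_mul
      · exact pow_le_pow_left₀ (by norm_num) hs1.le (k+1)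
      · apply Real.exp_le_exp.mpr
        have hs3 : s - 1 = -(1-s) := by ring
        rw [hs3, div_neg, neg_le, neg_neg]
        rw [div_le_iff₀ (by linarith : (0:ℝ) < 1 - s)]
        linarith
      · exact (Real.exp_pos _).le
      · positivity
    calc ENNReal.ofReal ((1/2)^(k+1) * Real.exp (-4) * (1/4))
        = ENNReal.ofReal ((1/2)^(k+1) * Real.exp (-4)) * volume (Ioc (1/2:ℝ) (3/4)) := by
          rw [Real.volume_Ioc, ← ENNReal.ofReal_mul (by positivity)]
          norm_num
      _ = ∫⁻ _ in Ioc (1/2:ℝ) (3/4), ENNReal.ofReal ((1/2)^(k+1) * Real.exp (-4)) := by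
          rw [setLIntegral_const]
      _ ≤ ∫⁻ s in Ioc (1/2:ℝ) (3/4), ENNReal.ofReal (s^(k+1)) * Wgt s :=
          setLIntegral_mono' measurableSet_Ioc h2
  -- part 1
  have hpart1 : (∫⁻ s in Ioc (0:ℝ) (1/2), ENNReal.ofReal (s^k) * Wgt s)
      ≤ ENNReal.ofReal (4 * Real.exp 4) * Rk (k+1) := by
    have hb : (∫⁻ s in Ioc (0:ℝ) (1/2), ENNReal.ofReal (s^k) * Wgt s)
        ≤ ENNReal.ofReal ((1/2)^k) * volume (Ioc (0:ℝ) (1/2)) := by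
      rw [← setLIntegral_const]
      refine setLIntegral_mono' measurableSet_Ioc (fun s hs => ?_)
      calc ENNReal.ofReal (s^k) * Wgt s ≤ ENNReal.ofReal (s^k) * 1 :=
            mul_le_mul_right (Wgt_le_one s) _
        _ ≤ ENNReal.ofReal ((1/2)^k) := by
            rw [mul_one]
            exact ENNReal.ofReal_le_ofReal (pow_le_pow_left₀ hs.1.le hs.2 k)
    have hval : ENNReal.ofReal ((1/2:ℝ)^k) * volume (Ioc (0:ℝ) (1/2))
        = ENNReal.ofReal ((1/2:ℝ)^(k+1)) := by
      rw [Real.volume_Ioc, ← ENNReal.ofReal_mul (by positivity)]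
      norm_num
      rw [pow_succ]
    have hfin : ENNReal.ofReal ((1/2:ℝ)^(k+1))
        = ENNReal.ofReal (4 * Real.exp 4) * ENNReal.ofReal ((1/2)^(k+1) * Real.exp (-4) * (1/4)) := by
      rw [← ENNReal.ofReal_mul (by positivity)]
      congr 1
      rw [Real.exp_neg]
      have := (Real.exp_pos 4).ne'
      field_simp
    calc (∫⁻ s in Ioc (0:ℝ) (1/2), ENNReal.ofReal (s^k) * Wgt s)
        ≤ ENNReal.ofReal ((1/2:ℝ)^k) * volume (Ioc (0:ℝ) (1/2)) := hb
      _ = ENNReal.ofReal (4 * Real.exp 4) * ENNReal.ofReal ((1/2)^(k+1) * Real.exp (-4) * (1/4)) := by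
          rw [hval, hfin]
      _ ≤ ENNReal.ofReal (4 * Real.exp 4) * Rk (k+1) := mul_le_mul_right hlow _
  -- part 2
  have hpart2 : (∫⁻ s in Ioi (1/2:ℝ), ENNReal.ofReal (s^k) * Wgt s) ≤ 2 * Rk (k+1) := by
    have hb : (∫⁻ s in Ioi (1/2:ℝ), ENNReal.ofReal (s^k) * Wgt s)
        ≤ ∫⁻ s in Ioi (1/2:ℝ), 2 * (ENNReal.ofReal (s^(k+1)) * Wgt s) := by
      refine setLIntegral_mono' measurableSet_Ioi (fun s hs => ?_)
      have hs' : (1/2:ℝ) < s := hs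
      rcases lt_or_ge s 1 with h1 | h1
      · rw [← mul_assoc]
        apply mul_le_mul_left
        rw [show (2:ENNReal) = ENNReal.ofReal 2 from (ENNReal.ofReal_ofNat 2).symm,
          ← ENNReal.ofReal_mul (by norm_num)]
        apply ENNReal.ofReal_le_ofReal
        calc s^k = 1 * s^k := (one_mul _).symm
          _ ≤ (2*s) * s^k := by
              apply mul_le_mul_of_nonneg_right (by linarith) (by positivity)
          _ = 2 * s^(k+1) := by ring
      · rw [Wgt_zero h1, mul_zero, mul_zero, mul_zero]
    calc (∫⁻ s in Ioi (1/2:ℝ), ENNReal.ofReal (s^k) * Wgt s)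
        ≤ ∫⁻ s in Ioi (1/2:ℝ), 2 * (ENNReal.ofReal (s^(k+1)) * Wgt s) := hb
      _ = 2 * ∫⁻ s in Ioi (1/2:ℝ), ENNReal.ofReal (s^(k+1)) * Wgt s := by
          rw [lintegral_const_mul' _ _ (by norm_num)]
      _ ≤ 2 * Rk (k+1) := by
          apply mul_le_mul_right
          apply lintegral_mono_set
          intro x hx
          have : (1/2:ℝ) < x := hx
          exact lt_trans (by norm_num) this
  calc Rk k = (∫⁻ s in Ioc (0:ℝ) (1/2), ENNReal.ofReal (s^k) * Wgt s)
      + ∫⁻ s in Ioi (1/2:ℝ), ENNReal.ofReal (s^k) * Wgt s := hRsplit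
    _ ≤ ENNReal.ofReal (4 * Real.exp 4) * Rk (k+1) + 2 * Rk (k+1) := add_le_add hpart1 hpart2
    _ = (2 + ENNReal.ofReal (4 * Real.exp 4)) * Rk (k+1) := by ring

lemma Rk_iter (k b : ℕ) :
    Rk k ≤ (2 + ENNReal.ofReal (4 * Real.exp 4))^b * Rk (k+b) := by
  induction b with
  | zero => simp
  | succ b ih =>
    calc Rk k ≤ (2 + ENNReal.ofReal (4 * Real.exp 4))^b * Rk (k+b) := ih
      _ ≤ (2 + ENNReal.ofReal (4 * Real.exp 4))^b *
          ((2 + ENNReal.ofReal (4 * Real.exp 4)) * Rk (k+b+1)) :=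
          mul_le_mul_right (Rk_step (k+b)) _
      _ = (2 + ENNReal.ofReal (4 * Real.exp 4))^(b+1) * Rk (k+(b+1)) := by
          rw [show k+(b+1) = k+b+1 by ring, pow_succ]
          ring
lemma L_eq (n : ℕ) (γ : Fin n → ℕ) :
    ENNReal.ofReal (∫ z in {z : Fin n → ℂ | ∑ i, ‖z i‖ ^ 2 < 1},
        (∏ i, ‖z i‖ ^ (2 * γ i)) * Real.exp (1 / ((∑ i, ‖z i‖ ^ 2) - 1)))
      = ∫⁻ z : Fin n → ℂ, (∏ i, ENNReal.ofReal (‖z i‖^(2 * γ i))) * Wgt (∑ i, ‖z i‖^2) := by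
  set S : Set (Fin n → ℂ) := {z : Fin n → ℂ | ∑ i, ‖z i‖ ^ 2 < 1} with hS
  set f : (Fin n → ℂ) → ℝ := fun z =>
    (∏ i, ‖z i‖ ^ (2 * γ i)) * Real.exp (1 / ((∑ i, ‖z i‖ ^ 2) - 1)) with hf
  have hSmeas : MeasurableSet S := measurableSet_lt sumsq_meas measurable_const
  have hfmeas : Measurable f := by
    apply Measurable.mul
    · exact Finset.measurable_prod _ (fun i _ => (measurable_pi_apply i).norm.pow_const _)
    · exact (measurable_const.div (sumsq_meas.sub_const 1)).exp
  have hball : ∀ z ∈ S, ∀ i, ‖z i‖ ≤ 1 := by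
    intro z hz i
    have h1 : ‖z i‖^2 ≤ ∑ j, ‖z j‖^2 :=
      Finset.single_le_sum (f := fun j => ‖z j‖^2) (fun j _ => by positivity) (Finset.mem_univ i)
    have h2 : (∑ j, ‖z j‖^2) < 1 := hz
    nlinarith [norm_nonneg (z i)]
  have hvolS : volume S ≠ ⊤ := by
    have hsub : S ⊆ Set.univ.pi (fun _ : Fin n => Metric.closedBall (0:ℂ) 1) := by
      intro z hz i _
      rw [Metric.mem_closedBall, dist_zero_right]
      exact hball z hz i
    refine ne_of_lt (lt_of_le_of_lt (measure_mono hsub) ?_)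
    rw [volume_pi_pi]
    refine ENNReal.prod_lt_top (fun i _ => ?_)
    rw [Complex.volume_closedBall]
    exact ENNReal.mul_lt_top (by simp) ENNReal.coe_lt_top
  have hfle : ∀ z ∈ S, f z ≤ 1 := by
    intro z hz
    rw [hf]
    have h1 : (∏ i, ‖z i‖ ^ (2 * γ i)) ≤ 1 := by
      apply Finset.prod_le_one (fun i _ => by positivity)
      intro i _
      exact pow_le_one₀ (norm_nonneg _) (hball z hz i)
    have h2 : Real.exp (1 / ((∑ i, ‖z i‖ ^ 2) - 1)) ≤ 1 := by
      rw [Real.exp_le_one_iff]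
      apply div_nonpos_of_nonneg_of_nonpos zero_le_one
      have : (∑ i, ‖z i‖^2) < 1 := hz
      linarith
    have h3 : (0:ℝ) ≤ ∏ i, ‖z i‖ ^ (2 * γ i) :=
      Finset.prod_nonneg (fun i _ => by positivity)
    calc (∏ i, ‖z i‖ ^ (2 * γ i)) * Real.exp (1 / ((∑ i, ‖z i‖ ^ 2) - 1))
        ≤ 1 * 1 := mul_le_mul h1 h2 (Real.exp_pos _).le zero_le_one
      _ = 1 := one_mul 1
  have hfnn : ∀ z, 0 ≤ f z := by
    intro z
    rw [hf]
    have h3 : (0:ℝ) ≤ ∏ i, ‖z i‖ ^ (2 * γ i) :=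
      Finset.prod_nonneg (fun i _ => by positivity)
    positivity
  have hint : IntegrableOn f S := by
    refine Measure.integrableOn_of_bounded hvolS hfmeas.aestronglyMeasurable (M := 1) ?_
    refine (ae_restrict_iff' hSmeas).mpr (Filter.Eventually.of_forall (fun z hz => ?_))
    rw [Real.norm_eq_abs, abs_of_nonneg (hfnn z)]
    exact hfle z hz
  rw [MeasureTheory.ofReal_integral_eq_lintegral_ofReal hint
    ((ae_restrict_iff' hSmeas).mpr (Filter.Eventually.of_forall (fun z _ => hfnn z)))]
  rw [← lintegral_indicator hSmeas]
  refine lintegral_congr (fun z => ?_)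
  rw [indicator_apply]
  by_cases hz : z ∈ S
  · rw [if_pos hz, hf]
    simp only
    rw [ENNReal.ofReal_mul (Finset.prod_nonneg (fun i _ => by positivity))]
    rw [ENNReal.ofReal_prod_of_nonneg (fun i _ => by positivity)]
    congr 1
    rw [Wgt, if_pos (by exact hz : (∑ i, ‖z i‖^2) < 1)]
  · rw [if_neg hz, Wgt_zero (not_lt.mp hz), mul_zero]

/-- Reverse Cauchy–Schwarz for monomial norms on the unit ball of `ℂⁿ` with weight
`exp(1/(‖z‖²−1))`: for every `β` there is `K_β > 0` with
`d_α·d_{α+2β} ≤ K_β·d_{α+β}²` for all `α`, where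
`d_γ² = ∫_{𝔹ⁿ} ∏ᵢ|zᵢ|^{2γᵢ}·exp(1/(‖z‖²−1)) dV`. -/
theorem stmt10 (n : ℕ) (β : Fin n → ℕ)
    (d : (Fin n → ℕ) → ℝ)
    (hd_nonneg : ∀ γ, 0 ≤ d γ)
    (hd : ∀ γ : Fin n → ℕ, d γ ^ 2 =
      ∫ z in {z : Fin n → ℂ | ∑ i, ‖z i‖ ^ 2 < 1},
        (∏ i, ‖z i‖ ^ (2 * γ i)) * Real.exp (1 / ((∑ i, ‖z i‖ ^ 2) - 1))) :
    ∃ K : ℝ, 0 < K ∧ ∀ α : Fin n → ℕ,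
      d α * d (α + 2 • β) ≤ K * d (α + β) ^ 2 := by
  cases n with
  | zero =>
    refine ⟨1, one_pos, fun α => ?_⟩
    haveI : Subsingleton (Fin 0 → ℕ) := ⟨fun f g => funext fun i => i.elim0⟩
    rw [Subsingleton.elim (α + 2 • β) α, Subsingleton.elim (α + β) α, one_mul, sq]
  | succ m =>
    set b : ℕ := ∑ i, β i with hb
    set K : ℝ := 2^b * (2 + 4 * Real.exp 4)^b with hK
    have hexp4 : (0:ℝ) < Real.exp 4 := Real.exp_pos 4
    have hKpos : 0 < K := by positivity
    refine ⟨K, hKpos, fun α => ?_⟩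
    -- L γ and its properties
    set L : (Fin (m+1) → ℕ) → ENNReal := fun γ =>
      ∫⁻ z : Fin (m+1) → ℂ, (∏ i, ENNReal.ofReal (‖z i‖^(2 * γ i))) * Wgt (∑ i, ‖z i‖^2)
      with hL
    have hLofReal : ∀ γ : Fin (m+1) → ℕ, L γ = ENNReal.ofReal (d γ ^ 2) := by
      intro γ
      rw [hd γ, hL]
      exact (L_eq (m+1) γ).symm
    have hLne : ∀ γ : Fin (m+1) → ℕ, L γ ≠ ⊤ := by
      intro γ; rw [hLofReal γ]; exact ENNReal.ofReal_ne_top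
    have hLid : ∀ γ : Fin (m+1) → ℕ, L γ = (NNReal.pi : ENNReal)^(m+1) *
        ENNReal.ofReal ((∏ i, ((γ i).factorial : ℝ)) / ((∑ i, γ i) + m).factorial) *
        Rk ((∑ i, γ i) + m) := by
      intro γ
      rw [hL]
      exact stepC m γ Wgt Wgt_meas
    -- sums
    set N : ℕ := ∑ i, α i with hN
    have hsum1 : ∑ i, (α + β) i = N + b := by
      rw [hN, hb, ← Finset.sum_add_distrib]
      rfl
    have hsum2 : ∑ i, (α + 2 • β) i = N + 2*b := by
      rw [hN, hb, Finset.mul_sum, ← Finset.sum_add_distrib]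
      rfl
    -- real constants
    set c0 : ℝ := (∏ i, ((α i).factorial : ℝ)) / (N + m).factorial with hc0
    set c2 : ℝ := (∏ i, (((α + 2 • β) i).factorial : ℝ)) / (N + 2*b + m).factorial with hc2
    set c1 : ℝ := (∏ i, (((α + β) i).factorial : ℝ)) / (N + b + m).factorial with hc1
    have hc1nn : 0 ≤ c1 := by
      rw [hc1]
      have : (0:ℝ) ≤ ∏ i, (((α + β) i).factorial : ℝ) :=
        Finset.prod_nonneg (fun i _ => by positivity)
      positivity
    -- key real inequality
    have hkey : c0 * c2 ≤ 4^b * c1^2 := by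
      have hnum : (∏ i, ((α i).factorial : ℝ)) * (∏ i, (((α + 2 • β) i).factorial : ℝ))
          ≤ 4^b * (∏ i, (((α + β) i).factorial : ℝ))^2 := by
        have hnat : (∏ i, (α i).factorial) * (∏ i, ((α + 2 • β) i).factorial)
            ≤ 4^b * (∏ i, ((α + β) i).factorial)^2 := by
          have h1 : ∀ i : Fin (m+1), (α + 2 • β) i = α i + 2 * β i := by
            intro i; simp [Pi.add_apply, Pi.smul_apply, smul_eq_mul]
          have h2 : ∀ i : Fin (m+1), (α + β) i = α i + β i := fun i => rfl
          calc (∏ i, (α i).factorial) * (∏ i, ((α + 2 • β) i).factorial)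
              = ∏ i, ((α i).factorial * (α i + 2 * β i).factorial) := by
                rw [← Finset.prod_mul_distrib]
                exact Finset.prod_congr rfl (fun i _ => by rw [h1 i])
            _ ≤ ∏ i, (4^(β i) * ((α i + β i).factorial)^2) :=
                Finset.prod_le_prod' (fun i _ => fact_coord (α i) (β i))
            _ = 4^b * (∏ i, ((α + β) i).factorial)^2 := by
                rw [Finset.prod_mul_distrib, Finset.prod_pow_eq_pow_sum, ← hb,
                  ← Finset.prod_pow]
                congr 1
        exact_mod_cast hnat
      have hden : ((N + b + m).factorial : ℝ)^2 ≤ ((N + m).factorial : ℝ) * (N + 2*b + m).factorial := by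
        have hnat : ((N + m + b).factorial)^2 ≤ (N + m).factorial * ((N + m) + 2*b).factorial :=
          fact_logconvex (N + m) b
        rw [show N + m + b = N + b + m by ring, show N + m + 2*b = N + 2*b + m by ring] at hnat
        exact_mod_cast hnat
      have hposden : (0:ℝ) < ((N + b + m).factorial : ℝ)^2 := by positivity
      have hnum2nn : (0:ℝ) ≤ 4^b * (∏ i, (((α + β) i).factorial : ℝ))^2 := by
        have : (0:ℝ) ≤ ∏ i, (((α + β) i).factorial : ℝ) :=
          Finset.prod_nonneg (fun i _ => by positivity)
        positivity
      have := div_le_div₀ hnum2nn hnum hposden hden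
      rw [hc0, hc2, hc1]
      calc (∏ i, ((α i).factorial : ℝ)) / (N + m).factorial *
            ((∏ i, (((α + 2 • β) i).factorial : ℝ)) / (N + 2*b + m).factorial)
          = ((∏ i, ((α i).factorial : ℝ)) * (∏ i, (((α + 2 • β) i).factorial : ℝ)))
            / (((N + m).factorial : ℝ) * (N + 2*b + m).factorial) := by
            rw [div_mul_div_comm]
        _ ≤ (4^b * (∏ i, (((α + β) i).factorial : ℝ))^2) / (((N + b + m).factorial : ℝ)^2) := this
        _ = 4^b * ((∏ i, (((α + β) i).factorial : ℝ)) / (N + b + m).factorial)^2 := by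
            rw [div_pow, mul_div_assoc]
    -- ENNReal inequality
    set C1 : ENNReal := 2 + ENNReal.ofReal (4 * Real.exp 4) with hC1
    have hC1eq : C1 = ENNReal.ofReal (2 + 4 * Real.exp 4) := by
      rw [hC1, ENNReal.ofReal_add (by norm_num) (by positivity)]
      norm_num
    have hofpow : (2 + ENNReal.ofReal (4 * Real.exp 4))^b
        = ENNReal.ofReal ((2 + 4 * Real.exp 4)^b) := by
      rw [show (2 + ENNReal.ofReal (4 * Real.exp 4)) = ENNReal.ofReal (2 + 4 * Real.exp 4) by
        rw [ENNReal.ofReal_add (by norm_num) (by positivity)]; norm_num]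
      rw [← ENNReal.ofReal_pow (by positivity)]
    have hRa : Rk (N + m) ≤ ENNReal.ofReal ((2 + 4 * Real.exp 4)^b) * Rk (N + b + m) := by
      have h := Rk_iter (N + m) b
      rw [show N + m + b = N + b + m by ring, hofpow] at h
      exact h
    have hRb : Rk (N + 2*b + m) ≤ Rk (N + b + m) := by
      have := Rk_anti (N + b + m) b
      rwa [show N + b + m + b = N + 2*b + m by ring] at this
    have hE : L α * L (α + 2 • β) ≤ ENNReal.ofReal (K^2) * (L (α + β))^2 := by
      rw [hLid α, hLid (α + 2 • β), hLid (α + β), hsum1, hsum2, ← hN, ← hc0, ← hc2, ← hc1]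
      have hrw : (NNReal.pi : ENNReal)^(m+1) * ENNReal.ofReal c0 * Rk (N + m) *
            ((NNReal.pi : ENNReal)^(m+1) * ENNReal.ofReal c2 * Rk (N + 2*b + m))
          = ((NNReal.pi : ENNReal)^(m+1))^2 * ((ENNReal.ofReal c0 * ENNReal.ofReal c2) *
            (Rk (N + m) * Rk (N + 2*b + m))) := by ring
      have hrw2 : ENNReal.ofReal (K^2) * ((NNReal.pi : ENNReal)^(m+1) * ENNReal.ofReal c1 *
            Rk (N + b + m))^2
          = ((NNReal.pi : ENNReal)^(m+1))^2 * (ENNReal.ofReal (K^2) *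
            ((ENNReal.ofReal c1)^2 * (Rk (N + b + m))^2)) := by ring
      rw [hrw, hrw2]
      apply mul_le_mul_right
      calc (ENNReal.ofReal c0 * ENNReal.ofReal c2) * (Rk (N + m) * Rk (N + 2*b + m))
          ≤ ENNReal.ofReal (4^b * c1^2) *
            ((ENNReal.ofReal ((2 + 4 * Real.exp 4)^b) * Rk (N + b + m)) * Rk (N + b + m)) := by
            apply mul_le_mul'
            · rw [← ENNReal.ofReal_mul (by positivity)]
              exact ENNReal.ofReal_le_ofReal hkey
            · exact mul_le_mul' hRa hRb
        _ = (ENNReal.ofReal (4^b) * ENNReal.ofReal ((2 + 4 * Real.exp 4)^b)) *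
            ((ENNReal.ofReal c1)^2 * (Rk (N + b + m))^2) := by
            rw [ENNReal.ofReal_mul (by positivity), ENNReal.ofReal_pow hc1nn]
            ring
        _ ≤ ENNReal.ofReal (K^2) * ((ENNReal.ofReal c1)^2 * (Rk (N + b + m))^2) := by
            apply mul_le_mul_left
            rw [← ENNReal.ofReal_mul (by positivity)]
            apply ENNReal.ofReal_le_ofReal
            rw [hK]
            have hy : (1:ℝ) ≤ (2 + 4 * Real.exp 4)^b := one_le_pow₀ (by linarith)
            have h4 : (0:ℝ) ≤ (4:ℝ)^b := by positivity
            have h24 : ((2:ℝ)^b)^2 = 4^b := by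
              rw [← pow_mul, mul_comm b 2, pow_mul]; norm_num
            calc (4:ℝ)^b * (2 + 4*Real.exp 4)^b
                ≤ 4^b * ((2 + 4*Real.exp 4)^b)^2 := by
                  have hsq : (2 + 4*Real.exp 4)^b ≤ ((2 + 4*Real.exp 4)^b)^2 := by
                    nlinarith [hy]
                  exact mul_le_mul_of_nonneg_left hsq h4
              _ = (2^b * (2 + 4*Real.exp 4)^b)^2 := by rw [mul_pow, h24]
    -- back to reals
    have hsq : (d α * d (α + 2 • β))^2 ≤ (K * d (α + β)^2)^2 := by
      have hRHSne : ENNReal.ofReal (K^2) * (L (α + β))^2 ≠ ⊤ :=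
        ENNReal.mul_ne_top ENNReal.ofReal_ne_top (by
          rw [pow_two]; exact ENNReal.mul_ne_top (hLne _) (hLne _))
      have := ENNReal.toReal_mono hRHSne hE
      rw [ENNReal.toReal_mul, hLofReal α, hLofReal (α + 2 • β),
        ENNReal.toReal_ofReal (by positivity), ENNReal.toReal_ofReal (by positivity)] at this
      rw [ENNReal.toReal_mul, ENNReal.toReal_ofReal (by positivity), pow_two (L (α + β)),
        ENNReal.toReal_mul, hLofReal (α + β), ENNReal.toReal_ofReal (by positivity)] at this
      calc (d α * d (α + 2 • β))^2 = d α ^2 * d (α + 2 • β)^2 := by ring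
        _ ≤ K^2 * (d (α + β)^2 * d (α + β)^2) := this
        _ = (K * d (α + β)^2)^2 := by ring
    have ha : 0 ≤ d α * d (α + 2 • β) := mul_nonneg (hd_nonneg _) (hd_nonneg _)
    have hB : 0 ≤ K * d (α + β)^2 := by positivity
    have h := Real.sqrt_le_sqrt hsq
    rwa [Real.sqrt_sq ha, Real.sqrt_sq hB] at h
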